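/- arXiv:1805.07816 — 8 statements merged into one kernel-verified Lean document; each statement's English description precedes it below -/
import Mathlib

section
/- (Local certificate.) Let C be a finite nonempty codebook in a metric space X, let ε ≥ 0, let T : X^d → X^d apply a nearest-code discretization coordinatewise, let Y be any set of labels, and let F : X^d → Y be any function. For an image x ∈ X^d and label y ∈ Y: if F(w) = y for every w ∈ S(x) = ∏_{i=1}^d C(x_i), then F(T(z)) = y for every z ∈ X^d with dist_∞(z, x) ≤ ε; i.e., the indicator I_F(x, y) implies the robustness predicate R_ε(x, y) for the classifier F ∘ T. -/
/-- **Local certificate.** If the classifier `F` outputs `y` on every element of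
`S(x) = ∏ᵢ C(xᵢ)`, where `C(p) = {c ∈ C : dist p c ≤ d*(p) + 2ε}` with
`d*(p) = inf_{c ∈ C} dist p c`, then `F (T z) = y` for every `z` with `dist_∞ z x ≤ ε`;
i.e. the indicator `I_F(x, y)` implies the robustness predicate `R_ε(x, y)` for `F ∘ T`. -/
theorem local_certificate
    {X Y : Type*} [MetricSpace X] {d : ℕ} (C : Set X) (hCfin : C.Finite) (hCne : C.Nonempty)
    (ε : ℝ) (hε : 0 ≤ ε)
    (t : X → X) (ht_mem : ∀ p : X, t p ∈ C)
    (ht_near : ∀ p : X, ∀ c ∈ C, dist p (t p) ≤ dist p c)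
    (T : (Fin d → X) → Fin d → X) (hT : ∀ z i, T z i = t (z i))
    (F : (Fin d → X) → Y) (x : Fin d → X) (y : Y)
    (hcert : ∀ w : Fin d → X,
      (∀ i : Fin d, w i ∈ {c ∈ C | dist (x i) c ≤ sInf (dist (x i) '' C) + 2 * ε}) → F w = y) :
    ∀ z : Fin d → X, dist z x ≤ ε → F (T z) = y := by
  intro z hz
  apply hcert
  intro i
  rw [hT]
  refine ⟨ht_mem _, ?_⟩
  have hzi : dist (z i) (x i) ≤ ε := le_trans (dist_le_pi_dist z x i) hz
  -- sInf attained
  have himg : ((dist (x i)) '' C).Nonempty := hCne.image _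
  have hfin : ((dist (x i)) '' C).Finite := hCfin.image _
  obtain ⟨m, hm_mem, hm_inf⟩ := Set.Finite.exists_minimalFor id _ hfin himg
  obtain ⟨c, hcC, hc⟩ := hm_mem
  have hInf : sInf ((dist (x i)) '' C) = dist (x i) c := by
    apply le_antisymm
    · exact csInf_le (hfin.bddBelow) ⟨c, hcC, rfl⟩
    · apply le_csInf himg
      intro b hb
      subst hc
      by_contra h
      push_neg at h
      have := hm_inf hb (le_of_lt h)
      simp only [id] at this
      linarith
  rw [hInf]
  calc dist (x i) (t (z i)) ≤ dist (x i) (z i) + dist (z i) (t (z i)) := dist_triangle _ _ _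
    _ ≤ ε + dist (z i) c := by
        have := ht_near (z i) c hcC
        rw [dist_comm (x i)]
        linarith
    _ ≤ ε + (dist (z i) (x i) + dist (x i) c) := by linarith [dist_triangle (z i) (x i) c]
    _ ≤ dist (x i) c + 2 * ε := by linarith
end

section
/- (Global certificate.) Let C be a finite nonempty codebook in a metric space X, let ε ≥ 0, let T : X^d → X^d apply a nearest-code discretization coordinatewise, let F : X^d → Y be a function, and let μ be a probability measure on X^d × Y for which the relevant sets below are measurable. Then μ{(x, y) : F(w) = y for all w ∈ S(x)} ≤ μ{(x, y) : F(T(z)) = y for all z with dist_∞(z, x) ≤ ε}; that is, the expectation s = E_μ[I_F(x, y)] is a lower bound on the robustness accuracy of F ∘ T under adversarial budget ε. -/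
open MeasureTheory

/-- **Global certificate.** The probability (under `μ`) that `F` is constantly `y`
on `S(x) = ∏ᵢ C(xᵢ)` is a lower bound on the robustness accuracy of `F ∘ T` under adversarial
budget `ε`, where `C(p) = {c ∈ C : dist p c ≤ d*(p) + 2ε}`, `d*(p) = inf_{c ∈ C} dist p c`,
and `T` applies the nearest-code discretization `t` coordinatewise. -/
theorem global_certificate
    {X Y : Type*} [MetricSpace X] [MeasurableSpace X] [MeasurableSpace Y] {d : ℕ}
    (C : Set X) (hCfin : C.Finite) (hCne : C.Nonempty)
    (ε : ℝ) (hε : 0 ≤ ε)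
    (t : X → X) (ht_mem : ∀ p : X, t p ∈ C)
    (ht_near : ∀ p : X, ∀ c ∈ C, dist p (t p) ≤ dist p c)
    (T : (Fin d → X) → Fin d → X) (hT : ∀ z i, T z i = t (z i))
    (F : (Fin d → X) → Y)
    (μ : Measure ((Fin d → X) × Y)) [IsProbabilityMeasure μ]
    (hmeasA : MeasurableSet {p : (Fin d → X) × Y | ∀ w : Fin d → X,
      (∀ i : Fin d, w i ∈ {c ∈ C | dist (p.1 i) c ≤ sInf (dist (p.1 i) '' C) + 2 * ε}) →
        F w = p.2})
    (hmeasB : MeasurableSet {p : (Fin d → X) × Y | ∀ z : Fin d → X,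
      dist z p.1 ≤ ε → F (T z) = p.2}) :
    μ {p : (Fin d → X) × Y | ∀ w : Fin d → X,
        (∀ i : Fin d, w i ∈ {c ∈ C | dist (p.1 i) c ≤ sInf (dist (p.1 i) '' C) + 2 * ε}) →
          F w = p.2}
      ≤ μ {p : (Fin d → X) × Y | ∀ z : Fin d → X, dist z p.1 ≤ ε → F (T z) = p.2} := by
  apply measure_mono
  rintro ⟨x, y⟩ hA z hz
  apply hA
  intro i
  rw [hT]
  refine ⟨ht_mem (z i), ?_⟩
  obtain ⟨c, hcC, hc⟩ : ∃ c ∈ C, dist (x i) c = sInf (dist (x i) '' C) := by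
    obtain ⟨c, hcC, hc⟩ := (hCne.image (dist (x i))).csInf_mem (hCfin.image _)
    exact ⟨c, hcC, hc⟩
  have hzi : dist (z i) (x i) ≤ ε := le_trans (dist_le_pi_dist z x i) hz
  calc dist (x i) (t (z i)) ≤ dist (x i) (z i) + dist (z i) (t (z i)) := dist_triangle _ _ _
    _ ≤ ε + dist (z i) c := by
        have := ht_near (z i) c hcC
        rw [dist_comm (x i) (z i)]; linarith
    _ ≤ ε + (dist (z i) (x i) + dist (x i) c) := by linarith [dist_triangle (z i) (x i) c]
    _ ≤ sInf (dist (x i) '' C) + 2 * ε := by rw [← hc] at *; linarith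
end

section
/- (Proposition 2, certified robustness from samples.) Let C be a finite nonempty codebook in a metric space X, ε ≥ 0, T : X^d → X^d the coordinatewise nearest-code preprocessor, F : X^d → Y measurable, and μ a probability measure on X^d × Y for which the relevant sets are measurable. Let (X⁽¹⁾, Y⁽¹⁾), …, (X⁽ᵐ⁾, Y⁽ᵐ⁾) be i.i.d. samples from μ and let ŝ = (1/m) · #{i ≤ m : F(w) = Y⁽ⁱ⁾ for all w ∈ S(X⁽ⁱ⁾)}. Then for every δ ∈ (0, 1), with probability at least 1 − δ over the samples, the robustness accuracy satisfies μ{(x, y) : F(T(z)) = y for all z with dist_∞(z, x) ≤ ε} ≥ ŝ − √((1/(2m)) · log(1/δ)). -/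
open MeasureTheory
open scoped Classical

open Real in
private lemma bern_aux (q : ℝ) (hq0 : 0 ≤ q) (hq1 : q ≤ 1) (t : ℝ) :
    1 - q + q * exp t ≤ exp (q * t + t ^ 2 / 8) := by
  set u : ℝ → ℝ := fun s => 1 - q + q * exp s with hu_def
  have hu : ∀ s, 0 < u s := by
    intro s
    rcases eq_or_lt_of_le hq0 with h | h
    · simp [u, ← h]
    · have h1 := exp_pos s
      have h2 : 0 < q * exp s := mul_pos h h1
      simp only [u]; nlinarith
  have hu' : ∀ s, HasDerivAt u (q * exp s) s := fun s =>
    ((Real.hasDerivAt_exp s).const_mul q).const_add (1 - q)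
  set g : ℝ → ℝ := fun s => q * s + s ^ 2 / 8 - log (u s) with hg_def
  set h : ℝ → ℝ := fun s => q + s / 4 - q * exp s / u s with hh_def
  have hg' : ∀ s, HasDerivAt g (h s) s := by
    intro s
    have h1 : HasDerivAt (fun x : ℝ => q * x) (q * 1) s := (hasDerivAt_id s).const_mul q
    have h2 : HasDerivAt (fun x : ℝ => x ^ 2 / 8) ((2 * s ^ 1) / 8) s :=
      (hasDerivAt_pow 2 s).div_const 8
    have h3 : HasDerivAt (fun x => log (u x)) (q * exp s / u s) s := (hu' s).log (hu s).ne'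
    have h4 := (h1.add h2).sub h3
    refine h4.congr_deriv ?_
    simp only [hh_def]; ring
  have hh' : ∀ s, HasDerivAt h (1 / 4 - q * exp s * (1 - q) / (u s) ^ 2) s := by
    intro s
    have h1 : HasDerivAt (fun x : ℝ => q + x / 4) (1 / 4) s := by
      simpa using ((hasDerivAt_id s).div_const 4).const_add q
    have h2 : HasDerivAt (fun x => q * exp x / u x)
        ((q * exp s * u s - q * exp s * (q * exp s)) / (u s) ^ 2) s :=
      ((Real.hasDerivAt_exp s).const_mul q).div (hu' s) (hu s).ne'
    have h4 := h1.sub h2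
    refine h4.congr_deriv ?_
    have hus := (hu s).ne'
    field_simp
    ring
  have hmono : Monotone h := by
    have hdiff : Differentiable ℝ h := fun s => (hh' s).differentiableAt
    refine monotone_of_deriv_nonneg hdiff ?_
    intro s
    rw [(hh' s).deriv]
    have ha : 0 ≤ q * exp s := mul_nonneg hq0 (exp_pos s).le
    have hb : 0 ≤ 1 - q := by linarith
    have husq : 0 < (u s) ^ 2 := pow_pos (hu s) 2
    rw [sub_nonneg, div_le_iff₀ husq]
    have hueq : u s = 1 - q + q * exp s := rfl
    nlinarith [sq_nonneg (q * exp s - (1 - q))]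
  have h0 : h 0 = 0 := by
    have : u 0 = 1 := by simp [hu_def]
    simp [hh_def, this]
  have g0 : g 0 = 0 := by
    have : u 0 = 1 := by simp [hu_def]
    simp [hg_def, this]
  have hgd : Differentiable ℝ g := fun s => (hg' s).differentiableAt
  have key : 0 ≤ g t := by
    rcases le_total 0 t with hs | hs
    · have hmOn : MonotoneOn g (Set.Ici 0) := by
        refine monotoneOn_of_deriv_nonneg (convex_Ici 0) hgd.continuous.continuousOn
          (fun x _ => (hgd x).differentiableWithinAt) ?_
        intro x hx
        rw [(hg' x).deriv, ← h0]
        exact hmono (le_of_lt (by simpa using hx))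
      have := hmOn Set.self_mem_Ici hs hs
      rwa [g0] at this
    · have hmOn : AntitoneOn g (Set.Iic 0) := by
        refine antitoneOn_of_deriv_nonpos (convex_Iic 0) hgd.continuous.continuousOn
          (fun x _ => (hgd x).differentiableWithinAt) ?_
        intro x hx
        rw [(hg' x).deriv, ← h0]
        exact hmono (le_of_lt (by simpa using hx))
      have := hmOn hs Set.self_mem_Iic hs
      rwa [g0] at this
  have hlog : log (u t) ≤ q * t + t ^ 2 / 8 := by
    have : g t = q * t + t ^ 2 / 8 - log (u t) := rfl
    linarith [key, this ▸ key]
  exact (Real.log_le_iff_le_exp (hu t)).mp hlog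

open Real MeasureTheory ProbabilityTheory in
private lemma hoeff_bernoulli {Ω : Type*} [MeasurableSpace Ω] (P : Measure Ω) [IsProbabilityMeasure P]
    {m : ℕ} (Z : Fin m → Ω → ℝ) (hZmeas : ∀ i, Measurable (Z i))
    (hZindep : iIndepFun Z P)
    (hZrange : ∀ i ω, Z i ω = 0 ∨ Z i ω = 1)
    (q : ℝ) (hq0 : 0 ≤ q) (hq1 : q ≤ 1)
    (hmgf : ∀ i t, mgf (Z i) P t = 1 - q + q * Real.exp t)
    (s : ℝ) (hs : 0 < s) :
    (P {ω | (m : ℝ) * (q + s) ≤ ∑ i, Z i ω}).toReal ≤ Real.exp (-2 * m * s ^ 2) := by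
  set V : Fin m → Ω → ℝ := fun i ω => Z i ω - q with hV_def
  have hVmeas : ∀ i, Measurable (V i) := fun i => (hZmeas i).sub measurable_const
  have hVindep : iIndepFun V P :=
    hZindep.comp (fun _ => fun x : ℝ => x - q) (fun _ => measurable_id.sub measurable_const)
  have hVint : ∀ (t : ℝ) (i : Fin m), Integrable (fun ω => Real.exp (t * V i ω)) P := by
    intro t i
    refine Integrable.mono' (integrable_const (Real.exp (|t| * (1 + |q|))))
      (((hVmeas i).const_mul t).exp.aestronglyMeasurable) (ae_of_all _ fun ω => ?_)
    rw [Real.norm_eq_abs, Real.abs_exp]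
    apply Real.exp_le_exp.mpr
    have hZ01 : (0:ℝ) ≤ Z i ω ∧ Z i ω ≤ 1 := by rcases hZrange i ω with h | h <;> simp [h]
    have hq2 := le_abs_self q
    have hq3 := neg_abs_le q
    have h2 : |Z i ω - q| ≤ 1 + |q| :=
      abs_le.mpr ⟨by linarith [hZ01.1], by linarith [hZ01.2]⟩
    calc t * (Z i ω - q) ≤ |t * (Z i ω - q)| := le_abs_self _
      _ = |t| * |Z i ω - q| := abs_mul _ _
      _ ≤ |t| * (1 + |q|) := mul_le_mul_of_nonneg_left h2 (abs_nonneg t)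
  have hVmgf : ∀ (t : ℝ) (i : Fin m), mgf (V i) P t ≤ Real.exp (t ^ 2 / 8) := by
    intro t i
    have heq : mgf (V i) P t = Real.exp (-(t * q)) * mgf (Z i) P t := by
      simp only [mgf, hV_def]
      rw [← MeasureTheory.integral_const_mul]
      congr 1; funext ω
      rw [← Real.exp_add]; congr 1; ring
    rw [heq, hmgf i t]
    calc Real.exp (-(t * q)) * (1 - q + q * Real.exp t)
        ≤ Real.exp (-(t * q)) * Real.exp (q * t + t ^ 2 / 8) :=
          mul_le_mul_of_nonneg_left (bern_aux q hq0 hq1 t) (Real.exp_pos _).le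
      _ = Real.exp (t ^ 2 / 8) := by rw [← Real.exp_add]; congr 1; ring
  have hsum_eq : ∀ ω, (∑ i, V i) ω = (∑ i, Z i ω) - m * q := by
    intro ω
    simp only [Finset.sum_apply, hV_def, Finset.sum_sub_distrib, Finset.sum_const,
      Finset.card_univ, Fintype.card_fin, nsmul_eq_mul]
  have hint : Integrable (fun ω => Real.exp (4 * s * (∑ i, V i) ω)) P :=
    hVindep.integrable_exp_mul_sum hVmeas (fun i _ => hVint (4 * s) i)
  have hchern := measure_ge_le_exp_mul_mgf (X := ∑ i, V i) (μ := P) (t := 4 * s)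
    ((m : ℝ) * s) (by positivity) hint
  have hmgfsum : mgf (∑ i, V i) P (4 * s) = ∏ i, mgf (V i) P (4 * s) :=
    hVindep.mgf_sum hVmeas Finset.univ
  have hprod : ∏ i : Fin m, mgf (V i) P (4 * s) ≤ Real.exp ((m : ℝ) * ((4 * s) ^ 2 / 8)) := by
    calc ∏ i : Fin m, mgf (V i) P (4 * s) ≤ ∏ _i : Fin m, Real.exp ((4 * s) ^ 2 / 8) :=
          Finset.prod_le_prod (fun i _ => mgf_nonneg) (fun i _ => hVmgf (4 * s) i)
      _ = Real.exp ((m : ℝ) * ((4 * s) ^ 2 / 8)) := by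
          rw [Finset.prod_const, Finset.card_univ, Fintype.card_fin, ← Real.exp_nat_mul]
  have hset : {ω | (m : ℝ) * (q + s) ≤ ∑ i, Z i ω} = {ω | (m : ℝ) * s ≤ (∑ i, V i) ω} := by
    ext ω
    simp only [Set.mem_setOf_eq, hsum_eq ω]
    constructor <;> intro hh <;> linarith
  rw [hset]
  refine hchern.trans ?_
  rw [hmgfsum]
  calc Real.exp (-(4 * s) * ((m : ℝ) * s)) * ∏ i, mgf (V i) P (4 * s)
      ≤ Real.exp (-(4 * s) * ((m : ℝ) * s)) * Real.exp ((m : ℝ) * ((4 * s) ^ 2 / 8)) :=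
        mul_le_mul_of_nonneg_left hprod (Real.exp_pos _).le
    _ = Real.exp (-2 * m * s ^ 2) := by rw [← Real.exp_add]; congr 1; ring

open ProbabilityTheory in
/-- **Proposition 2: certified robustness from samples.** Given i.i.d. samples
`W 1, …, W m` from `μ`, let `ŝ` be the fraction of samples `(x, y)` on which `F` is constantly
`y` on `S(x) = ∏ᵢ C(xᵢ)`. Then with probability at least `1 − δ` over the samples, the
robustness accuracy of `F ∘ T` with budget `ε` is at least `ŝ − √((1/(2m))·log(1/δ))`. -/
theorem certified_robustness_from_samples
    {X Y : Type*} [MetricSpace X] [MeasurableSpace X] [MeasurableSpace Y] {d : ℕ}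
    (C : Set X) (hCfin : C.Finite) (hCne : C.Nonempty)
    (ε : ℝ) (hε : 0 ≤ ε)
    (t : X → X) (ht_mem : ∀ p : X, t p ∈ C)
    (ht_near : ∀ p : X, ∀ c ∈ C, dist p (t p) ≤ dist p c)
    (T : (Fin d → X) → Fin d → X) (hT : ∀ z i, T z i = t (z i))
    (F : (Fin d → X) → Y) (hF : Measurable F)
    (μ : Measure ((Fin d → X) × Y)) [IsProbabilityMeasure μ]
    (hmeasA : MeasurableSet {p : (Fin d → X) × Y | ∀ w : Fin d → X,
      (∀ i : Fin d, w i ∈ {c ∈ C | dist (p.1 i) c ≤ sInf (dist (p.1 i) '' C) + 2 * ε}) →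
        F w = p.2})
    {Ω : Type*} [MeasurableSpace Ω] (P : Measure Ω) [IsProbabilityMeasure P]
    {m : ℕ} (hm : 0 < m)
    (W : Fin m → Ω → (Fin d → X) × Y)
    (hWmeas : ∀ i, Measurable (W i))
    (hWlaw : ∀ i, Measure.map (W i) P = μ)
    (hWindep : ProbabilityTheory.iIndepFun W P)
    (δ : ℝ) (hδ0 : 0 < δ) (hδ1 : δ < 1) :
    P {ω : Ω |
        ((Finset.univ.filter (fun i : Fin m => ∀ w : Fin d → X,
            (∀ j : Fin d, w j ∈ {c ∈ C |
              dist ((W i ω).1 j) c ≤ sInf (dist ((W i ω).1 j) '' C) + 2 * ε}) →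
            F w = (W i ω).2)).card : ℝ) / m
          - Real.sqrt ((1 / (2 * m)) * Real.log (1 / δ))
        ≤ (μ {p : (Fin d → X) × Y | ∀ z : Fin d → X,
              dist z p.1 ≤ ε → F (T z) = p.2}).toReal}
      ≥ ENNReal.ofReal (1 - δ) := by
  set A : Set ((Fin d → X) × Y) := {p | ∀ w : Fin d → X,
      (∀ i : Fin d, w i ∈ {c ∈ C | dist (p.1 i) c ≤ sInf (dist (p.1 i) '' C) + 2 * ε}) →
        F w = p.2} with hA_def
  set B : Set ((Fin d → X) × Y) := {p | ∀ z : Fin d → X,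
      dist z p.1 ≤ ε → F (T z) = p.2} with hB_def
  -- Step 1: certificate inclusion
  have hAB : A ⊆ B := by
    intro p hp z hz
    apply hp (T z)
    intro i
    rw [hT]
    obtain ⟨c0, hc0C, hc0⟩ : ∃ c0 ∈ C, dist (p.1 i) c0 = sInf (dist (p.1 i) '' C) := by
      have hne : (dist (p.1 i) '' C).Nonempty := hCne.image _
      have hfin : (dist (p.1 i) '' C).Finite := hCfin.image _
      obtain ⟨c0, hc0, heq⟩ := hne.csInf_mem hfin
      exact ⟨c0, hc0, heq⟩
    have hzi : dist (z i) (p.1 i) ≤ ε := (dist_le_pi_dist z p.1 i).trans hz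
    refine ⟨ht_mem (z i), ?_⟩
    have h1 : dist (p.1 i) (t (z i)) ≤ dist (p.1 i) (z i) + dist (z i) (t (z i)) :=
      dist_triangle _ _ _
    have h2 : dist (z i) (t (z i)) ≤ dist (z i) c0 := ht_near (z i) c0 hc0C
    have h3 : dist (z i) c0 ≤ dist (z i) (p.1 i) + dist (p.1 i) c0 := dist_triangle _ _ _
    have h4 : dist (p.1 i) (z i) = dist (z i) (p.1 i) := dist_comm _ _
    rw [← hc0]
    linarith
  have hqB : (μ A).toReal ≤ (μ B).toReal :=
    ENNReal.toReal_mono (measure_ne_top μ B) (measure_mono hAB)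
  -- Step 2: empirical variables
  set q : ℝ := (μ A).toReal with hq_def
  have hq0 : 0 ≤ q := ENNReal.toReal_nonneg
  have hq1 : q ≤ 1 := by
    have h := prob_le_one (μ := μ) (s := A)
    simpa [hq_def] using ENNReal.toReal_mono ENNReal.one_ne_top h
  set Z : Fin m → Ω → ℝ := fun i ω => A.indicator (fun _ => 1) (W i ω) with hZ_def
  have hZmeas : ∀ i, Measurable (Z i) := fun i =>
    (measurable_const.indicator hmeasA).comp (hWmeas i)
  have hZindep : iIndepFun Z P :=
    hWindep.comp (fun _ => A.indicator fun _ => (1 : ℝ))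
      (fun _ => measurable_const.indicator hmeasA)
  have hZrange : ∀ i ω, Z i ω = 0 ∨ Z i ω = 1 := by
    intro i ω
    by_cases h : W i ω ∈ A <;> simp [hZ_def, h]
  have hZmgf : ∀ (i : Fin m) (s : ℝ), mgf (Z i) P s = 1 - q + q * Real.exp s := by
    intro i s
    have hsm : AEStronglyMeasurable
        (fun p => Real.exp (s * A.indicator (fun _ => (1:ℝ)) p)) (Measure.map (W i) P) :=
      ((measurable_const.indicator hmeasA).const_mul s).exp.aestronglyMeasurable
    have h1 : mgf (Z i) P s = ∫ p, Real.exp (s * A.indicator (fun _ => (1:ℝ)) p) ∂μ := by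
      rw [mgf, ← hWlaw i, integral_map (hWmeas i).aemeasurable hsm]
    rw [h1]
    have h2 : (fun p => Real.exp (s * A.indicator (fun _ => (1:ℝ)) p)) =
        fun p => A.indicator (fun _ => Real.exp s - 1) p + 1 := by
      funext p
      by_cases hp : p ∈ A <;> simp [hp]
    rw [h2, integral_add ((integrable_const _).indicator hmeasA) (integrable_const 1),
      integral_indicator_const _ hmeasA, integral_const, probReal_univ]
    simp only [smul_eq_mul, ENNReal.toReal_one, one_smul, Measure.real, ← hq_def]
    ring
  -- Step 3: Hoeffding
  set s : ℝ := Real.sqrt ((1 / (2 * (m : ℝ))) * Real.log (1 / δ)) with hs_def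
  have hm' : (0 : ℝ) < m := by exact_mod_cast hm
  have hlogpos : 0 < Real.log (1 / δ) := Real.log_pos (one_lt_one_div hδ0 hδ1)
  have hs : 0 < s := Real.sqrt_pos.mpr (by positivity)
  have hexp : Real.exp (-2 * m * s ^ 2) = δ := by
    have hsq : s ^ 2 = (1 / (2 * (m : ℝ))) * Real.log (1 / δ) := by
      rw [hs_def, Real.sq_sqrt (by positivity)]
    rw [hsq]
    have : -2 * (m : ℝ) * ((1 / (2 * (m : ℝ))) * Real.log (1 / δ)) = Real.log δ := by
      rw [Real.log_div one_ne_zero hδ0.ne', Real.log_one]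
      field_simp
      ring
    rw [this, Real.exp_log hδ0]
  have hhoeff := hoeff_bernoulli P Z hZmeas hZindep hZrange q hq0 hq1 hZmgf s hs
  rw [hexp] at hhoeff
  set E : Set Ω := {ω | (m : ℝ) * (q + s) ≤ ∑ i, Z i ω} with hE_def
  have hE : MeasurableSet E :=
    measurableSet_le measurable_const (Finset.measurable_sum _ fun i _ => hZmeas i)
  -- the good event contains Eᶜ
  have hcard : ∀ ω, ((Finset.univ.filter (fun i : Fin m => ∀ w : Fin d → X,
        (∀ j : Fin d, w j ∈ {c ∈ C |
          dist ((W i ω).1 j) c ≤ sInf (dist ((W i ω).1 j) '' C) + 2 * ε}) →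
        F w = (W i ω).2)).card : ℝ) = ∑ i, Z i ω := by
    intro ω
    have hmemiff : ∀ i : Fin m, (∀ w : Fin d → X,
        (∀ j : Fin d, w j ∈ {c ∈ C |
          dist ((W i ω).1 j) c ≤ sInf (dist ((W i ω).1 j) '' C) + 2 * ε}) →
        F w = (W i ω).2) = (W i ω ∈ A) := by
      intro i
      rw [hA_def]
      rfl
    simp only [hmemiff]
    rw [Finset.card_filter]
    push_cast
    refine Finset.sum_congr rfl fun i _ => ?_
    simp only [hZ_def]
    by_cases h : W i ω ∈ A
    · rw [Set.indicator_of_mem h, if_pos h]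
    · rw [Set.indicator_of_notMem h, if_neg h]
  have hsub : Eᶜ ⊆ {ω : Ω |
        ((Finset.univ.filter (fun i : Fin m => ∀ w : Fin d → X,
            (∀ j : Fin d, w j ∈ {c ∈ C |
              dist ((W i ω).1 j) c ≤ sInf (dist ((W i ω).1 j) '' C) + 2 * ε}) →
            F w = (W i ω).2)).card : ℝ) / m
          - Real.sqrt ((1 / (2 * m)) * Real.log (1 / δ))
        ≤ (μ {p : (Fin d → X) × Y | ∀ z : Fin d → X,
              dist z p.1 ≤ ε → F (T z) = p.2}).toReal} := by
    intro ω hω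
    simp only [hE_def, Set.mem_compl_iff, Set.mem_setOf_eq, not_le] at hω
    rw [Set.mem_setOf_eq, hcard ω]
    have hlt : (∑ i, Z i ω) / m < q + s := (div_lt_iff₀ hm').mpr (by linarith)
    have : (μ {p : (Fin d → X) × Y | ∀ z : Fin d → X,
        dist z p.1 ≤ ε → F (T z) = p.2}).toReal = (μ B).toReal := rfl
    rw [this]
    have hss : Real.sqrt ((1 / (2 * (m:ℝ))) * Real.log (1 / δ)) = s := rfl
    rw [hss]
    linarith
  -- Step 4: measure arithmetic
  rw [ge_iff_le]
  calc ENNReal.ofReal (1 - δ) ≤ P Eᶜ := by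
        rw [prob_compl_eq_one_sub hE]
        have hPE : P E ≤ ENNReal.ofReal δ :=
          (ENNReal.le_ofReal_iff_toReal_le (measure_ne_top P E) hδ0.le).mpr hhoeff
        have h1 : ENNReal.ofReal (1 - δ) + ENNReal.ofReal δ = 1 := by
          rw [← ENNReal.ofReal_add (by linarith) hδ0.le]
          norm_num
        calc ENNReal.ofReal (1 - δ) ≤ 1 - ENNReal.ofReal δ := by
              refine ENNReal.le_sub_of_add_le_right ENNReal.ofReal_ne_top h1.le
          _ ≤ 1 - P E := tsub_le_tsub_left hPE 1
    _ ≤ _ := measure_mono hsub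
end

section
/- (Per-pixel correctness under the idealized model.) Let X be a metric space, let c*₁, …, c*ₖ ∈ X satisfy dist(c*_i, c*_j) ≥ Γ for all i ≠ j, and let c₁, …, cₖ be a ν-approximation of c*₁, …, c*ₖ (dist(c_i, c*_i) ≤ ν for all i), with ν ≥ 0 and Γ > 16ν. Let x ∈ X satisfy dist(x, c*_j) ≤ Γ/8 for some index j. Then for every z ∈ X with dist(z, x) ≤ 5ν, one has dist(z, c_j) < dist(z, c_l) for every l ≠ j; hence any nearest-code discretization with codebook {c₁, …, cₖ} maps z to c_j. -/
/-- **Per-pixel correctness under the idealized model.** If the ground-truth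
codewords `c*₁, …, c*ₖ` are pairwise `Γ`-separated, `c₁, …, cₖ` is a `ν`-approximation of them
with `Γ > 16ν`, and the pixel `x` satisfies `dist x (c*_j) ≤ Γ/8`, then every `z` with
`dist z x ≤ 5ν` has `c_j` as its strictly unique nearest code, and hence any nearest-code
discretization with codebook `{c₁, …, cₖ}` maps `z` to `c_j`. -/
theorem per_pixel_correctness_idealized
    {X : Type*} [MetricSpace X] {k : ℕ} (cs c : Fin k → X)
    (Γ ν : ℝ) (hν : 0 ≤ ν) (hΓ : 16 * ν < Γ)
    (hsep : ∀ i j : Fin k, i ≠ j → Γ ≤ dist (cs i) (cs j))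
    (happrox : ∀ i : Fin k, dist (c i) (cs i) ≤ ν)
    (x : X) (j : Fin k) (hx : dist x (cs j) ≤ Γ / 8) :
    ∀ z : X, dist z x ≤ 5 * ν →
      (∀ l : Fin k, l ≠ j → dist z (c j) < dist z (c l)) ∧
      (∀ t : X → X, (∀ p : X, ∃ i : Fin k, t p = c i) →
        (∀ (p : X) (i : Fin k), dist p (t p) ≤ dist p (c i)) →
        t z = c j) := by
  intro z hz
  have hnear : ∀ l : Fin k, l ≠ j → dist z (c j) < dist z (c l) := by
    intro l hl
    have h1 : dist z (c j) ≤ dist z x + dist x (cs j) + dist (cs j) (c j) := by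
      calc dist z (c j) ≤ dist z (cs j) + dist (cs j) (c j) := dist_triangle _ _ _
        _ ≤ dist z x + dist x (cs j) + dist (cs j) (c j) := by
            have := dist_triangle z x (cs j); linarith
    have hj := happrox j
    rw [dist_comm (c j)] at hj
    have hupper : dist z (c j) ≤ 5 * ν + Γ / 8 + ν := by linarith
    have hsep' := hsep j l (Ne.symm hl)
    have h2 : Γ ≤ dist (cs j) (cs l) := hsep'
    have h3 : dist (cs j) (cs l) ≤ dist (cs j) x + dist x z + dist z (c l) + dist (c l) (cs l) := by
      have a := dist_triangle (cs j) x (cs l)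
      have b := dist_triangle x z (cs l)
      have d := dist_triangle z (c l) (cs l)
      linarith
    have hl' := happrox l
    rw [dist_comm (cs j) x] at h3
    rw [dist_comm x z] at h3
    have hlower : Γ - Γ / 8 - 5 * ν - ν ≤ dist z (c l) := by linarith
    linarith
  refine ⟨hnear, fun t hcode hnc => ?_⟩
  obtain ⟨i, hi⟩ := hcode z
  by_cases h : i = j
  · rw [hi, h]
  · exfalso
    have h1 := hnc z j
    rw [hi] at h1
    exact absurd h1 (not_le.mpr (hnear i h))
end

section
/- (Discretization of a perturbed image equals a code perturbation of its skeleton.) Let X be a metric space, let c*₁, …, c*ₖ ∈ X satisfy dist(c*_i, c*_j) ≥ Γ for all i ≠ j, let c₁, …, cₖ be a ν-approximation of c*₁, …, c*ₖ with ν ≥ 0 and Γ > 16ν, and let T : X^d → X^d be the coordinatewise nearest-code preprocessor for the codebook {c₁, …, cₖ}, breaking ties arbitrarily. Suppose the image x ∈ X^d has a skeleton u ∈ X^d with u_i ∈ {c*₁, …, c*ₖ} and dist(x_i, u_i) ≤ Γ/8 for every coordinate i. Then for every 0 ≤ ε ≤ 5ν and every z ∈ X^d with dist_∞(z, x) ≤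 ε, T(z) = Ĝ(u), where Ĝ : X^d → X^d is the coordinatewise map sending c*_i to c_i (for each coordinate whose value is some c*_i). -/
/-- **Discretization of a perturbed image equals a code perturbation of the
skeleton.** With `Γ`-separated ground-truth codewords `c*`, a `ν`-approximation `c` with
`Γ > 16ν`, and the coordinatewise nearest-code preprocessor `T` (arbitrary ties) for the
codebook `{c₁, …, cₖ}`: if the image `x` has a skeleton `u` with each `uᵢ` some `c*_idx` and
`dist xᵢ uᵢ ≤ Γ/8`, then for every `0 ≤ ε ≤ 5ν` and every `z` with `dist_∞ z x ≤ ε`,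
`T z = Ĝ u`, where `Ĝ` is the coordinatewise map sending `c*_idx` to `c_idx`. -/
theorem discretization_of_perturbed_image_is_code_perturbation
    {X : Type*} [MetricSpace X] {d k : ℕ} (cs c : Fin k → X)
    (Γ ν : ℝ) (hν : 0 ≤ ν) (hΓ : 16 * ν < Γ)
    (hsep : ∀ i j : Fin k, i ≠ j → Γ ≤ dist (cs i) (cs j))
    (happrox : ∀ i : Fin k, dist (c i) (cs i) ≤ ν)
    (t : X → X) (ht_mem : ∀ p : X, ∃ i : Fin k, t p = c i)
    (ht_near : ∀ (p : X) (i : Fin k), dist p (t p) ≤ dist p (c i))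
    (T : (Fin d → X) → Fin d → X) (hT : ∀ z i, T z i = t (z i))
    (x u : Fin d → X)
    (hu : ∀ i : Fin d, (∃ idx : Fin k, u i = cs idx) ∧ dist (x i) (u i) ≤ Γ / 8)
    (ε : ℝ) (hε0 : 0 ≤ ε) (hε : ε ≤ 5 * ν)
    (z : Fin d → X) (hz : dist z x ≤ ε)
    (Ghat : (Fin d → X) → Fin d → X)
    (hGhat : ∀ (w : Fin d → X) (i : Fin d) (idx : Fin k), w i = cs idx → Ghat w i = c idx) :
    T z = Ghat u := by
  funext i
  obtain ⟨⟨idx, hidx⟩, hxu⟩ := hu i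
  rw [hT, hGhat u i idx hidx]
  obtain ⟨j, hj⟩ := ht_mem (z i)
  have hzx : dist (z i) (x i) ≤ ε := le_trans (dist_le_pi_dist z x i) hz
  -- distance from z i to the ground-truth codeword cs idx
  have hds : dist (z i) (cs idx) ≤ Γ / 8 + 5 * ν := by
    calc dist (z i) (cs idx) ≤ dist (z i) (x i) + dist (x i) (cs idx) := dist_triangle _ _ _
      _ ≤ ε + Γ / 8 := by rw [← hidx]; gcongr
      _ ≤ Γ / 8 + 5 * ν := by linarith
  have hd : dist (z i) (c idx) ≤ dist (z i) (cs idx) + ν := by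
    calc dist (z i) (c idx) ≤ dist (z i) (cs idx) + dist (cs idx) (c idx) := dist_triangle _ _ _
      _ ≤ dist (z i) (cs idx) + ν := by
          gcongr; rw [dist_comm]; exact happrox idx
  have hdj : dist (z i) (c j) ≤ dist (z i) (cs idx) + ν :=
    le_trans (hj ▸ ht_near (z i) idx) hd
  rcases eq_or_ne j idx with h | h
  · rw [hj, h]
  · exfalso
    have hsep' := hsep j idx h
    have htri : dist (cs j) (cs idx) ≤ dist (cs j) (c j) + dist (c j) (z i) + dist (z i) (cs idx) :=
      dist_triangle4 _ _ _ _
    have h1 : dist (cs j) (c j) ≤ ν := by rw [dist_comm]; exact happrox j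
    rw [dist_comm (c j)] at htri
    linarith
end

section
/- (Proposition 1, robustness boost with approximate codewords.) Let X be a metric space, c*₁, …, c*ₖ ∈ X with dist(c*_i, c*_j) ≥ Γ for i ≠ j, and c₁, …, cₖ a ν-approximation of c*₁, …, c*ₖ with ν ≥ 0 and Γ > 16ν. Let T : X^d → X^d be the coordinatewise nearest-code preprocessor for {c₁, …, cₖ}, let F : X^d → Y be any function, let 0 ≤ ε ≤ 5ν, and let μ be a probability measure on triples (x, u, y) ∈ X^d × X^d × Y, with the relevant sets measurable, such that μ-almost surely every coordinate satisfies u_i ∈ {c*₁, …, c*ₖ} and dist(x_i, u_i) ≤ Γ/8. Then μ{(x, u, y) : F(T(z)) = y for all z with dist_∞(z, x) ≤ ε} ≥ μ{(x, u, y) : F(Ĝ(u)) = y} ≥ inf_G μ{(x, u, y) : F(G(u)) = y}, where Ĝ is the coordinatewise map sending c*_i to c_i and the infimum is over all ν-code perturbations G. -/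
open MeasureTheory

/-- A `ν`-code perturbation for ground-truth codewords `cs`: a map `G : X^d → X^d` that acts
coordinatewise on tuples whose entries are among the `cs idx`, replacing each occurrence of
`cs idx` by a fixed point `c' idx` with `dist (c' idx) (cs idx) ≤ ν`. -/
def IsNuCodePerturbation {X : Type*} [MetricSpace X] {d k : ℕ}
    (cs : Fin k → X) (ν : ℝ) (G : (Fin d → X) → Fin d → X) : Prop :=
  ∃ c' : Fin k → X, (∀ i : Fin k, dist (c' i) (cs i) ≤ ν) ∧
    ∀ u : Fin d → X, (∀ i : Fin d, ∃ idx : Fin k, u i = cs idx) →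
      ∀ (i : Fin d) (idx : Fin k), u i = cs idx → G u i = c' idx

/-- **Proposition 1: robustness boost with approximate codewords.** Under the
idealized model (skeleton entries among `Γ`-separated ground-truth codewords `cs`, pixels
within `Γ/8` of the skeleton, `μ`-almost surely), a `ν`-approximation codebook `c` with
`Γ > 16ν`, the coordinatewise nearest-code preprocessor `T`, and any `0 ≤ ε ≤ 5ν`:
the robustness accuracy of `F ∘ T` is at least the accuracy of `F ∘ Ĝ` on skeletons, which is
at least the infimum over all `ν`-code perturbations `G` of the accuracy of `F ∘ G`. -/
theorem robustness_boost_with_approximate_codewords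
    {X Y : Type*} [MetricSpace X] [MeasurableSpace X] [MeasurableSpace Y] {d k : ℕ}
    (cs c : Fin k → X)
    (Γ ν : ℝ) (hν : 0 ≤ ν) (hΓ : 16 * ν < Γ)
    (hsep : ∀ i j : Fin k, i ≠ j → Γ ≤ dist (cs i) (cs j))
    (happrox : ∀ i : Fin k, dist (c i) (cs i) ≤ ν)
    (t : X → X) (ht_mem : ∀ p : X, ∃ i : Fin k, t p = c i)
    (ht_near : ∀ (p : X) (i : Fin k), dist p (t p) ≤ dist p (c i))
    (T : (Fin d → X) → Fin d → X) (hT : ∀ z i, T z i = t (z i))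
    (F : (Fin d → X) → Y)
    (ε : ℝ) (hε0 : 0 ≤ ε) (hε : ε ≤ 5 * ν)
    (μ : Measure ((Fin d → X) × (Fin d → X) × Y)) [IsProbabilityMeasure μ]
    (has : ∀ᵐ q ∂μ, ∀ i : Fin d,
      (∃ idx : Fin k, q.2.1 i = cs idx) ∧ dist (q.1 i) (q.2.1 i) ≤ Γ / 8)
    (Ghat : (Fin d → X) → Fin d → X)
    (hGhat : ∀ (w : Fin d → X) (i : Fin d) (idx : Fin k), w i = cs idx → Ghat w i = c idx)
    (hmeasR : MeasurableSet {q : (Fin d → X) × (Fin d → X) × Y |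
      ∀ z : Fin d → X, dist z q.1 ≤ ε → F (T z) = q.2.2})
    (hmeasG : MeasurableSet {q : (Fin d → X) × (Fin d → X) × Y | F (Ghat q.2.1) = q.2.2}) :
    μ {q : (Fin d → X) × (Fin d → X) × Y |
        ∀ z : Fin d → X, dist z q.1 ≤ ε → F (T z) = q.2.2}
      ≥ μ {q : (Fin d → X) × (Fin d → X) × Y | F (Ghat q.2.1) = q.2.2}
    ∧ μ {q : (Fin d → X) × (Fin d → X) × Y | F (Ghat q.2.1) = q.2.2}
      ≥ ⨅ G : {G : (Fin d → X) → Fin d → X // IsNuCodePerturbation cs ν G},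
          μ {q : (Fin d → X) × (Fin d → X) × Y | F (G.1 q.2.1) = q.2.2} := by
  constructor
  · apply measure_mono_ae
    filter_upwards [has] with q hq hF z hz
    have key : T z = Ghat q.2.1 := by
      funext i
      obtain ⟨⟨idx, hidx⟩, hdx⟩ := hq i
      rw [hGhat _ i idx hidx, hT]
      obtain ⟨j, hj⟩ := ht_mem (z i)
      by_cases hje : j = idx
      · rw [hj, hje]
      · exfalso
        have h1 : dist (z i) (q.1 i) ≤ ε := le_trans (dist_le_pi_dist z q.1 i) hz
        have h2 : dist (z i) (cs idx) ≤ ε + Γ / 8 := by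
           calc dist (z i) (cs idx) ≤ dist (z i) (q.1 i) + dist (q.1 i) (cs idx) :=
                dist_triangle _ _ _
            _ ≤ ε + Γ / 8 := by rw [← hidx]; exact add_le_add h1 hdx
        have h3 : dist (z i) (t (z i)) ≤ ε + Γ / 8 + ν :=
          le_trans (ht_near (z i) idx)
            (le_trans (dist_triangle _ (cs idx) _)
              (add_le_add h2 (by rw [dist_comm]; exact happrox idx)))
        have h4 : Γ ≤ dist (cs idx) (cs j) := hsep idx j (Ne.symm hje)
        have h5 : dist (cs idx) (cs j) ≤ dist (cs idx) (z i) + dist (z i) (c j)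
            + dist (c j) (cs j) := dist_triangle4 _ _ _ _
        rw [← hj] at h5
        have h6 : dist (cs idx) (z i) ≤ ε + Γ / 8 := by rw [dist_comm]; exact h2
        have h7 := happrox j
        rw [← hj] at h7
        linarith
    rw [key]; exact hF
  · exact iInf_le (fun G : {G : (Fin d → X) → Fin d → X // IsNuCodePerturbation cs ν G} =>
      μ {q : (Fin d → X) × (Fin d → X) × Y | F (G.1 q.2.1) = q.2.2})
      ⟨Ghat, c, happrox, fun u _ i idx h => hGhat u i idx h⟩
end

section
/- (Deterministic correctness of greedy codeword selection.) Let V be a finite subset of a metric space X, h : V → ℝ, ν > 0, and let c*₁, …, c*ₖ be distinct elements of V with dist(c*_i, c*_j) ≥ Γ for all i ≠ j, where Γ > 16ν. Suppose that for every v ∈ V with dist(v, c*_j) ≥ ν for all j, one has h(v) < h(c*_i) for every i. Then: (1) for every greedy selection with removal radius 2ν, at each step t ∈ {1, …, k} the remaining set V_t is nonempty; and (2) every greedy selection c₁, …, cₖ of length k with removal radius 2ν admits a permutation π of {1, …, k} such that dist(c_t, c*_{π(t)}) < ν for every t. -/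
/-- A sequence `c 0, …, c (m-1)` of points is a *greedy selection* from the finite set `V`
with weight function `h` and removal radius `r`: at each step `s`, `c s` belongs to the
remaining set `V_s = {v ∈ V : dist v (c s') > r for all s' < s}` and maximizes `h` over it. -/
def GreedySelection {X : Type*} [MetricSpace X] (V : Finset X) (h : X → ℝ) (r : ℝ)
    {m : ℕ} (c : Fin m → X) : Prop :=
  ∀ s : Fin m,
    (c s ∈ V ∧ ∀ s' : Fin m, s' < s → r < dist (c s) (c s')) ∧
    (∀ v ∈ V, (∀ s' : Fin m, s' < s → r < dist v (c s')) → h v ≤ h (c s))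

/-- **Deterministic correctness of greedy codeword selection.** Let `V` be
finite, `h : V → ℝ`, `ν > 0`, and `c*₁, …, c*ₖ ∈ V` distinct and pairwise `Γ`-separated with
`Γ > 16ν`; suppose every `v ∈ V` that is `ν`-far from all `c*_j` satisfies `h v < h (c*_i)`
for all `i`. Then (1) every greedy selection (removal radius `2ν`) of length `< k` leaves a
nonempty remaining set, and (2) every greedy selection of length `k` matches the ground-truth
codewords up to a permutation `π`, with `dist (c_t) (c*_{π t}) < ν` for every `t`. -/
theorem greedy_codeword_selection_correct
    {X : Type*} [MetricSpace X] (V : Finset X) (h : X → ℝ)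
    (ν Γ : ℝ) (hν : 0 < ν) (hΓ : 16 * ν < Γ)
    {k : ℕ} (cs : Fin k → X) (hmem : ∀ i : Fin k, cs i ∈ V)
    (hinj : Function.Injective cs)
    (hsep : ∀ i j : Fin k, i ≠ j → Γ ≤ dist (cs i) (cs j))
    (hfar : ∀ v ∈ V, (∀ j : Fin k, ν ≤ dist v (cs j)) → ∀ i : Fin k, h v < h (cs i)) :
    (∀ m : ℕ, m < k → ∀ c : Fin m → X, GreedySelection V h (2 * ν) c →
      ∃ v ∈ V, ∀ s : Fin m, 2 * ν < dist v (c s)) ∧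
    (∀ c : Fin k → X, GreedySelection V h (2 * ν) c →
      ∃ π : Equiv.Perm (Fin k), ∀ t : Fin k, dist (c t) (cs (π t)) < ν) := by
  have key : ∀ m : ℕ, m ≤ k → ∀ c : Fin m → X, GreedySelection V h (2 * ν) c →
      ∃ j : Fin m → Fin k, Function.Injective j ∧ ∀ t, dist (c t) (cs (j t)) < ν := by
    intro m hm c hc
    have main0 : ∀ n : ℕ, ∀ ht : n < m, ∃ i : Fin k, dist (c ⟨n, ht⟩) (cs i) < ν := by
      intro n
      induction n using Nat.strong_induction_on with
      | _ n IH =>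
        intro ht
        by_contra hcon
        push_neg at hcon
        -- choose near codewords for earlier steps
        have hex : ∀ s : Fin n, ∃ i : Fin k,
            dist (c ⟨s.1, lt_trans s.2 ht⟩) (cs i) < ν := by
          intro s
          exact IH s.1 s.2 (lt_trans s.2 ht)
        choose f hf using hex
        have hfin : Function.Injective f := by
          intro s s' hss
          by_contra hne
          have hne' : (⟨s.1, lt_trans s.2 ht⟩ : Fin m) ≠ ⟨s'.1, lt_trans s'.2 ht⟩ := by
            intro hEq
            exact hne (Fin.ext (by simpa using congrArg Fin.val hEq))
          have hgt : 2 * ν < dist (c ⟨s.1, lt_trans s.2 ht⟩) (c ⟨s'.1, lt_trans s'.2 ht⟩) := by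
            rcases lt_or_gt_of_ne hne' with hlt | hlt
            · have := (hc ⟨s'.1, lt_trans s'.2 ht⟩).1.2 ⟨s.1, lt_trans s.2 ht⟩ hlt
              rw [dist_comm] at this
              exact this
            · exact (hc ⟨s.1, lt_trans s.2 ht⟩).1.2 ⟨s'.1, lt_trans s'.2 ht⟩ hlt
          have h1 := hf s
          have h2 := hf s'
          rw [dist_comm] at h2
          have htri := dist_triangle (c ⟨s.1, lt_trans s.2 ht⟩) (cs (f s))
            (c ⟨s'.1, lt_trans s'.2 ht⟩)
          rw [hss] at h1 htri
          linarith
        -- there is an unused codeword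
        have hcard : n < k := lt_of_lt_of_le ht hm
        have hnsurj : ¬ Function.Surjective f := by
          intro hsurj
          have := Fintype.card_le_of_surjective f hsurj
          simp at this
          omega
        unfold Function.Surjective at hnsurj
        push_neg at hnsurj
        obtain ⟨i, hi⟩ := hnsurj
        -- cs i is in the remaining set at step n
        have hfari : ∀ s' : Fin m, s' < (⟨n, ht⟩ : Fin m) → 2 * ν < dist (cs i) (c s') := by
          intro s' hs'
          set s : Fin n := ⟨s'.1, hs'⟩ with hsdef
          have hs'eq : (⟨s.1, lt_trans s.2 ht⟩ : Fin m) = s' := Fin.ext rfl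
          have hne : i ≠ f s := fun hEq => hi s hEq.symm
          have hsep' := hsep i (f s) hne
          have hclose := hf s
          rw [hs'eq] at hclose
          have htri := dist_triangle (cs i) (c s') (cs (f s))
          linarith
        have hle := (hc ⟨n, ht⟩).2 (cs i) (hmem i) hfari
        have hlt := hfar (c ⟨n, ht⟩) (hc ⟨n, ht⟩).1.1 hcon i
        linarith
    have main : ∀ t : Fin m, ∃ i : Fin k, dist (c t) (cs i) < ν := fun t => main0 t.1 t.2
    choose j hj using main
    refine ⟨j, ?_, hj⟩
    intro s s' hss
    by_contra hne
    have hgt : 2 * ν < dist (c s) (c s') := by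
      rcases lt_or_gt_of_ne hne with hlt | hlt
      · have := (hc s').1.2 s hlt
        rw [dist_comm] at this
        exact this
      · exact (hc s).1.2 s' hlt
    have h1 := hj s
    have h2 := hj s'
    rw [dist_comm] at h2
    have htri := dist_triangle (c s) (cs (j s)) (c s')
    rw [hss] at h1 htri
    linarith
  constructor
  · intro m hmlt c hc
    obtain ⟨j, hjinj, hjd⟩ := key m hmlt.le c hc
    have hnsurj : ¬ Function.Surjective j := by
      intro hsurj
      have := Fintype.card_le_of_surjective j hsurj
      simp at this
      omega
    unfold Function.Surjective at hnsurj
    push_neg at hnsurj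
    obtain ⟨i, hi⟩ := hnsurj
    refine ⟨cs i, hmem i, ?_⟩
    intro s
    have hne : i ≠ j s := fun hEq => hi s hEq.symm
    have hsep' := hsep i (j s) hne
    have hclose := hjd s
    have htri := dist_triangle (cs i) (c s) (cs (j s))
    linarith
  · intro c hc
    obtain ⟨j, hjinj, hjd⟩ := key k le_rfl c hc
    have hbij : Function.Bijective j := (Finite.injective_iff_bijective).mp hjinj
    exact ⟨Equiv.ofBijective j hbij, fun t => hjd t⟩
end

section
/- (Lemma 1: greedy density-based codeword construction recovers ground-truth codewords.) Let V be a finite subset of a metric space X with |V| = M ≥ 2, and let X₁, …, X_N be i.i.d. V-valued random variables (pixels) with distribution p. Let c*₁, …, c*ₖ ∈ V be distinct with dist(c*_i, c*_j) ≥ Γ for i ≠ j, let ν > 0 with Γ > 16ν, and let α, σ > 0 and δ ∈ (0, 1] be such that: p(c*_i) ≥ α/k for every i; p(v) ≤ α·exp(−ν²/σ²) for every v ∈ V with dist(v, c*_j) ≥ ν for all j; and α/k − γ > α·exp(−ν²/σ²) + γ, where γ = √((4/N)·log(M/δ)). Let h : V → ℝ be the empirical frequency h(v) = (1/N)·#{i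 : X_i = v}. Then with probability at least 1 − δ, every greedy selection c₁, …, cₖ of length k with removal radius 2ν with respect to h admits a permutation π of {1, …, k} such that dist(c_t, c*_{π(t)}) ≤ ν for every t. -/
open MeasureTheory
open scoped Classical

lemma greedy_det {X : Type*} [MetricSpace X] (V : Finset X) {k : ℕ} (cs : Fin k → X)
    (hmem : ∀ i : Fin k, cs i ∈ V)
    (ν Γ : ℝ) (hν : 0 < ν) (hΓ : 16 * ν < Γ)
    (hsep : ∀ i j : Fin k, i ≠ j → Γ ≤ dist (cs i) (cs j))
    (a B γ : ℝ) (hγ : 0 ≤ γ)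
    (p h : X → ℝ)
    (hp1 : ∀ i : Fin k, a ≤ p (cs i))
    (hp2 : ∀ v ∈ V, (∀ j : Fin k, ν ≤ dist v (cs j)) → p v ≤ B)
    (hgap : B + γ < a - γ)
    (hconc : ∀ v ∈ V, |h v - p v| ≤ γ)
    (c : Fin k → X) (hc : GreedySelection V h (2 * ν) c) :
    ∃ π : Equiv.Perm (Fin k), ∀ t : Fin k, dist (c t) (cs (π t)) ≤ ν := by
  -- main claim by strong induction
  have key : ∀ n : ℕ, ∀ t : Fin k, (t : ℕ) < n → ∃ j : Fin k, dist (c t) (cs j) ≤ ν := by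
    intro n
    induction n with
    | zero => intro t ht; omega
    | succ n ih =>
      intro t ht
      rcases Nat.lt_or_ge (t : ℕ) n with h' | h'
      · exact ih t h'
      -- now the real work; ih applies to all s < t
      have IH : ∀ s : Fin k, s < t → ∃ j : Fin k, dist (c s) (cs j) ≤ ν := by
        intro s hs
        have hsv : (s : ℕ) < (t : ℕ) := hs
        exact ih s (by omega)
      clear ih h' ht
      -- witness function
      set ws : Fin k → Fin k := fun j =>
        if hj : ∃ s : Fin k, s < t ∧ dist (c s) (cs j) ≤ ν then hj.choose else t with hws
      set U : Finset (Fin k) :=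
        Finset.univ.filter (fun j => ∃ s : Fin k, s < t ∧ dist (c s) (cs j) ≤ ν) with hU
      have hwsU : ∀ j ∈ U, ws j < t ∧ dist (c (ws j)) (cs j) ≤ ν := by
        intro j hj
        rw [hU, Finset.mem_filter] at hj
        have hj' := hj.2
        simp only [hws, dif_pos hj']
        exact hj'.choose_spec
      have hUcard : U.card < k := by
        have hmap : U.card ≤ (Finset.range (t : ℕ)).card := by
          apply Finset.card_le_card_of_injOn (fun j => ((ws j : Fin k) : ℕ))
          · intro j hj
            simp only [Finset.mem_range]
            exact Finset.mem_coe.mpr (Finset.mem_range.mpr (hwsU j hj).1)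
          · intro j₁ h₁ j₂ h₂ heq
            by_contra hne
            have hd : Γ ≤ dist (cs j₁) (cs j₂) := hsep _ _ hne
            have e : ws j₁ = ws j₂ := Fin.ext heq
            have d1 := (hwsU j₁ h₁).2
            have d2 := (hwsU j₂ h₂).2
            rw [e] at d1
            have : dist (cs j₁) (cs j₂) ≤ 2 * ν := by
              calc dist (cs j₁) (cs j₂) ≤ dist (cs j₁) (c (ws j₂)) + dist (c (ws j₂)) (cs j₂) :=
                dist_triangle _ _ _
              _ ≤ ν + ν := by
                  rw [dist_comm]; exact add_le_add d1 d2
              _ = 2 * ν := by ring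
            linarith
        have ht' : (t : ℕ) < k := t.isLt
        simp only [Finset.card_range] at hmap
        omega
      -- fresh index j
      have hex : ∃ j : Fin k, j ∉ U := by
        by_contra hforall
        push_neg at hforall
        have : U = Finset.univ := Finset.eq_univ_iff_forall.mpr hforall
        rw [this, Finset.card_univ, Fintype.card_fin] at hUcard
        omega
      obtain ⟨j, hjU⟩ := hex
      have hfar : ∀ s : Fin k, s < t → ν < dist (c s) (cs j) := by
        intro s hs
        by_contra hle
        push_neg at hle
        exact hjU (by rw [hU, Finset.mem_filter]; exact ⟨Finset.mem_univ _, s, hs, hle⟩)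
      -- cs j is in the remaining set at step t
      have hrem : ∀ s' : Fin k, s' < t → 2 * ν < dist (cs j) (c s') := by
        intro s hs
        obtain ⟨j', hj'⟩ := IH s hs
        have hne : j' ≠ j := by
          intro e; rw [e] at hj'
          have := hfar s hs
          linarith
        have hd : Γ ≤ dist (cs j) (cs j') := hsep _ _ (Ne.symm hne)
        have : dist (cs j) (cs j') ≤ dist (cs j) (c s) + dist (c s) (cs j') :=
          dist_triangle _ _ _
        linarith
      have hmax := (hc t).2 (cs j) (hmem j) hrem
      -- conclude c t is ν-close to some codeword
      by_contra hno
      push_neg at hno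
      have hfarall : ∀ j' : Fin k, ν ≤ dist (c t) (cs j') := fun j' => (hno j').le
      have hcV : c t ∈ V := (hc t).1.1
      have h1 : p (c t) ≤ B := hp2 _ hcV hfarall
      have h2 : |h (c t) - p (c t)| ≤ γ := hconc _ hcV
      have h3 : |h (cs j) - p (cs j)| ≤ γ := hconc _ (hmem j)
      have h4 : a ≤ p (cs j) := hp1 j
      rw [abs_le] at h2 h3
      linarith [h2.1, h2.2, h3.1, h3.2]
  have key' : ∀ t : Fin k, ∃ j : Fin k, dist (c t) (cs j) ≤ ν := fun t => key k t t.isLt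
  choose J hJ using key'
  have hJinj : Function.Injective J := by
    intro s t hst
    by_contra hne
    rcases lt_or_gt_of_ne hne with hlt | hlt
    · have hgr := (hc t).1.2 s hlt
      have : dist (c t) (c s) ≤ 2 * ν := by
        calc dist (c t) (c s) ≤ dist (c t) (cs (J t)) + dist (cs (J t)) (c s) :=
          dist_triangle _ _ _
        _ ≤ ν + ν := by
            refine add_le_add (hJ t) ?_
            rw [← hst, dist_comm]; exact hJ s
        _ = 2 * ν := by ring
      linarith
    · have hgr := (hc s).1.2 t hlt
      have : dist (c s) (c t) ≤ 2 * ν := by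
        calc dist (c s) (c t) ≤ dist (c s) (cs (J s)) + dist (cs (J s)) (c t) :=
          dist_triangle _ _ _
        _ ≤ ν + ν := by
            refine add_le_add (hJ s) ?_
            rw [hst, dist_comm]; exact hJ t
        _ = 2 * ν := by ring
      linarith
  refine ⟨Equiv.ofBijective J (Finite.injective_iff_bijective.mp hJinj), ?_⟩
  intro t
  exact hJ t


open MeasureTheory
open scoped Classical

lemma integrable_of_bdd {Ω : Type*} [MeasurableSpace Ω] (μ : Measure Ω) [IsFiniteMeasure μ]
    {f : Ω → ℝ} (hf : Measurable f) (C : ℝ) (hC : ∀ ω, |f ω| ≤ C) : Integrable f μ :=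
  Integrable.mono' (integrable_const C) hf.aestronglyMeasurable
    (ae_of_all _ fun ω => by simpa using hC ω)

lemma bern_exp_integral {X : Type*} [MeasurableSpace X] [MeasurableSingletonClass X]
    (μX : Measure X) [IsProbabilityMeasure μX] (v : X) (t : ℝ) (ht : |t| ≤ 1) :
    ∫ x, Real.exp (t * ((if x = v then (1:ℝ) else 0) - (μX {v}).toReal)) ∂μX
      ≤ Real.exp (3 / 16 * t ^ 2) := by
  set p : ℝ := (μX {v}).toReal with hp
  have hp0 : 0 ≤ p := ENNReal.toReal_nonneg
  have hp1 : p ≤ 1 := by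
    have h := prob_le_one (μ := μX) (s := {v})
    simpa [hp] using ENNReal.toReal_mono ENNReal.one_ne_top h
  set φ : X → ℝ := fun x => (if x = v then (1:ℝ) else 0) - p with hφdef
  have hsv : MeasurableSet {x : X | x = v} := by
    simpa [Set.setOf_eq_eq_singleton] using measurableSet_singleton v
  have hφmeas : Measurable φ :=
    (Measurable.ite hsv measurable_const measurable_const).sub measurable_const
  have hφbdd : ∀ x, |φ x| ≤ 1 := by
    intro x
    rw [abs_le]
    dsimp [φ]
    split_ifs <;> constructor <;> linarith
  -- pointwise bound
  have hpt : ∀ x, Real.exp (t * φ x) ≤ 1 + t * φ x + 3 / 4 * (t * φ x) ^ 2 := by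
    intro x
    set y := t * φ x with hy
    have hby : |y| ≤ 1 := by
      rw [hy, abs_mul]
      exact mul_le_one₀ ht (abs_nonneg _) (hφbdd x)
    have h2 := Real.exp_bound hby (n := 2) (by norm_num)
    have hsum : ∑ m ∈ Finset.range 2, y ^ m / m.factorial = 1 + y := by
      simp [Finset.sum_range_succ, Nat.factorial]
    rw [hsum] at h2
    have h4 := (abs_le.mp h2).2
    rw [sq_abs] at h4
    norm_num [Nat.factorial] at h4
    linarith
  -- integrability
  have hint1 : Integrable (fun x => Real.exp (t * φ x)) μX := by
    apply integrable_of_bdd μX ((hφmeas.const_mul t).exp) (Real.exp 1)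
    intro x
    rw [abs_of_pos (Real.exp_pos _)]
    apply Real.exp_le_exp.mpr
    calc t * φ x ≤ |t * φ x| := le_abs_self _
    _ ≤ 1 := by
        rw [abs_mul]; exact mul_le_one₀ ht (abs_nonneg _) (hφbdd x)
  have hintφ : Integrable φ μX := integrable_of_bdd μX hφmeas 1 hφbdd
  have hintφ2 : Integrable (fun x => φ x ^ 2) μX := by
    apply integrable_of_bdd μX (hφmeas.pow_const 2) 1
    intro x
    rw [abs_pow]
    calc |φ x| ^ 2 ≤ 1 ^ 2 := by
          apply pow_le_pow_left₀ (abs_nonneg _) (hφbdd x)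
    _ = 1 := one_pow 2
  have hint2 : Integrable (fun x => 1 + t * φ x + 3 / 4 * (t * φ x) ^ 2) μX := by
    have : (fun x => 1 + t * φ x + 3 / 4 * (t * φ x) ^ 2)
        = fun x => 1 + t * φ x + (3 / 4 * t ^ 2) * φ x ^ 2 := by
      funext x; ring
    rw [this]
    exact ((integrable_const 1).add (hintφ.const_mul t)).add (hintφ2.const_mul _)
  -- value of integrals
  have hind : ∫ x, (if x = v then (1:ℝ) else 0) ∂μX = p := by
    have : (fun x => if x = v then (1:ℝ) else 0)
        = Set.indicator {v} (fun _ => (1:ℝ)) := by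
      funext x; simp [Set.indicator_apply]
    rw [this, integral_indicator_const (1 : ℝ) (measurableSet_singleton v)]
    simp [hp]
    rfl
  have hIφ : ∫ x, φ x ∂μX = 0 := by
    rw [hφdef]
    rw [integral_sub (by
      apply integrable_of_bdd μX (Measurable.ite hsv measurable_const measurable_const) 1
      intro x; split_ifs <;> norm_num) (integrable_const p)]
    rw [hind, integral_const]
    simp
  have hIφ2 : ∫ x, φ x ^ 2 ∂μX = p * (1 - p) := by
    have hsq : (fun x => φ x ^ 2)
        = fun x => Set.indicator {v} (fun _ => ((1 - p) ^ 2 - p ^ 2)) x + p ^ 2 := by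
      funext x
      simp only [hφdef, Set.indicator_apply, Set.mem_singleton_iff]
      split_ifs <;> ring
    rw [hsq, integral_add ((integrable_const _).indicator (measurableSet_singleton v))
      (integrable_const _)]
    rw [integral_indicator_const _ (measurableSet_singleton v), integral_const]
    simp [hp]
    simp only [measureReal_def]
    ring
  -- combine
  have hmono := integral_mono hint1 hint2 hpt
  have hval : ∫ x, (1 + t * φ x + 3 / 4 * (t * φ x) ^ 2) ∂μX
      = 1 + t * (∫ x, φ x ∂μX) + (3 / 4 * t ^ 2) * ∫ x, φ x ^ 2 ∂μX := by
    have : (fun x => 1 + t * φ x + 3 / 4 * (t * φ x) ^ 2)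
        = fun x => 1 + t * φ x + (3 / 4 * t ^ 2) * φ x ^ 2 := by
      funext x; ring
    rw [this, integral_add (f := fun x => 1 + t * φ x)
        (g := fun x => 3 / 4 * t ^ 2 * φ x ^ 2)
        ((integrable_const 1).add (hintφ.const_mul t)) (hintφ2.const_mul _),
      integral_add (f := fun _ => (1:ℝ)) (g := fun x => t * φ x)
        (integrable_const 1) (hintφ.const_mul t)]
    rw [integral_const, integral_const_mul, integral_const_mul]
    simp
  rw [hval, hIφ, hIφ2] at hmono
  have hq : p * (1 - p) ≤ 1 / 4 := by nlinarith [sq_nonneg (2 * p - 1)]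
  have ht2 : 0 ≤ t ^ 2 := sq_nonneg t
  calc ∫ x, Real.exp (t * ((if x = v then (1:ℝ) else 0) - p)) ∂μX
      ≤ 1 + t * 0 + 3 / 4 * t ^ 2 * (p * (1 - p)) := hmono
  _ ≤ 1 + 3 / 16 * t ^ 2 := by nlinarith
  _ ≤ Real.exp (3 / 16 * t ^ 2) := by
      linarith [Real.add_one_le_exp (3 / 16 * t ^ 2)]


set_option maxHeartbeats 1000000 in
/-- **Lemma 1: greedy density-based codeword construction recovers the
ground-truth codewords.** Pixels `X₁, …, X_N` are i.i.d. `V`-valued with distribution `p`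
(formalized as the probability measure `μX`, `p v = μX {v}`). The ground-truth codewords
`c*₁, …, c*ₖ ∈ V` are distinct and pairwise `Γ`-separated with `Γ > 16ν`; `p(c*_i) ≥ α/k`,
`p(v) ≤ α·exp(−ν²/σ²)` for every `v ∈ V` that is `ν`-far from all `c*_j`, and
`α/k − γ > α·exp(−ν²/σ²) + γ` where `γ = √((4/N)·log(M/δ))`, `M = |V| ≥ 2`. Then with
probability at least `1 − δ`, every greedy selection of length `k` with removal radius `2ν`
w.r.t. the empirical frequency matches the `c*_i` up to a permutation, within distance `ν`. -/
theorem greedy_density_codewords_recover_ground_truth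
    {X : Type*} [MetricSpace X] [MeasurableSpace X] [MeasurableSingletonClass X]
    (V : Finset X) (hM : 2 ≤ V.card)
    {Ω : Type*} [MeasurableSpace Ω] (P : Measure Ω) [IsProbabilityMeasure P]
    {N : ℕ} (hN : 0 < N)
    (Xs : Fin N → Ω → X) (hmeas : ∀ i, Measurable (Xs i))
    (hval : ∀ i ω, Xs i ω ∈ V)
    (μX : Measure X) [IsProbabilityMeasure μX]
    (hlaw : ∀ i, Measure.map (Xs i) P = μX)
    (hindep : ProbabilityTheory.iIndepFun Xs P)
    {k : ℕ} (cs : Fin k → X) (hmem : ∀ i : Fin k, cs i ∈ V)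
    (hinj : Function.Injective cs)
    (ν Γ : ℝ) (hν : 0 < ν) (hΓ : 16 * ν < Γ)
    (hsep : ∀ i j : Fin k, i ≠ j → Γ ≤ dist (cs i) (cs j))
    (α σ : ℝ) (hα : 0 < α) (hσ : 0 < σ)
    (δ : ℝ) (hδ0 : 0 < δ) (hδ1 : δ ≤ 1)
    (hp1 : ∀ i : Fin k, α / k ≤ (μX {cs i}).toReal)
    (hp2 : ∀ v ∈ V, (∀ j : Fin k, ν ≤ dist v (cs j)) →
      (μX {v}).toReal ≤ α * Real.exp (-ν ^ 2 / σ ^ 2))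
    (hgap : α * Real.exp (-ν ^ 2 / σ ^ 2) + Real.sqrt ((4 / N) * Real.log (V.card / δ))
      < α / k - Real.sqrt ((4 / N) * Real.log (V.card / δ))) :
    P {ω : Ω | ∀ c : Fin k → X,
        GreedySelection V
          (fun v => ((Finset.univ.filter (fun i : Fin N => Xs i ω = v)).card : ℝ) / N)
          (2 * ν) c →
        ∃ π : Equiv.Perm (Fin k), ∀ t : Fin k, dist (c t) (cs (π t)) ≤ ν}
      ≥ ENNReal.ofReal (1 - δ) := by
  have hB : 0 < α * Real.exp (-ν ^ 2 / σ ^ 2) := by positivity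
  set L : ℝ := Real.log (V.card / δ) with hLdef
  set γ : ℝ := Real.sqrt ((4 / N) * L) with hγdef
  have hMR : (2:ℝ) ≤ (V.card : ℝ) := by exact_mod_cast hM
  have hMδ : (2:ℝ) ≤ (V.card : ℝ) / δ := by
    rw [le_div_iff₀ hδ0]; nlinarith
  have hL0 : 0 ≤ L := Real.log_nonneg (by linarith)
  have hγ0 : 0 ≤ γ := Real.sqrt_nonneg _
  have hγsq : γ ^ 2 = (4 / N) * L := Real.sq_sqrt (by positivity)
  have hNpos : (0:ℝ) < N := by exact_mod_cast hN
  -- k ≥ 1 and γ ≤ 1/2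
  have hk : 0 < k := by
    rcases Nat.eq_zero_or_pos k with h0 | h
    · exfalso
      subst h0
      simp only [Nat.cast_zero, div_zero] at hgap
      linarith
    · exact h
  have hak : α / k ≤ 1 := by
    have h1 := hp1 ⟨0, hk⟩
    have h2 : (μX {cs ⟨0, hk⟩}).toReal ≤ 1 :=
      ENNReal.toReal_mono ENNReal.one_ne_top prob_le_one
    linarith
  have hγhalf : γ ≤ 1 / 2 := by linarith
  -- events
  set A : X → Set Ω := fun v =>
    {ω | |((Finset.univ.filter (fun i : Fin N => Xs i ω = v)).card : ℝ) / N
      - (μX {v}).toReal| ≤ γ} with hA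
  have hcmeas : ∀ v : X, Measurable (fun ω =>
      ((Finset.univ.filter (fun i : Fin N => Xs i ω = v)).card : ℝ) / N) := by
    intro v
    apply Measurable.div_const
    have : (fun ω => ((Finset.univ.filter (fun i : Fin N => Xs i ω = v)).card : ℝ))
        = fun ω => ∑ i : Fin N, (if Xs i ω = v then (1:ℝ) else 0) := by
      funext ω
      rw [Finset.card_filter]
      push_cast
      rfl
    rw [this]
    apply Finset.measurable_sum
    intro i _
    exact Measurable.ite ((hmeas i) (measurableSet_singleton v)) measurable_const
      measurable_const
  have hAmeas : ∀ v, MeasurableSet (A v) := by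
    intro v
    exact (((hcmeas v).sub_const _).abs) measurableSet_Iic
  set E : Set Ω := ⋂ v ∈ V, A v with hE
  have hEmeas : MeasurableSet E :=
    MeasurableSet.biInter V.countable_toSet (fun v _ => hAmeas v)
  -- concentration per point
  have hconc : ∀ v ∈ V, P ((A v)ᶜ) ≤ ENNReal.ofReal (2 * Real.exp (-(3 * L))) := by
    intro v hv
    have hpv0 : 0 ≤ (μX {v}).toReal := ENNReal.toReal_nonneg
    have hpv1 : (μX {v}).toReal ≤ 1 :=
      ENNReal.toReal_mono ENNReal.one_ne_top prob_le_one
    set φ : X → ℝ := fun x => (if x = v then (1:ℝ) else 0) - (μX {v}).toReal with hφdef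
    set Z : Fin N → Ω → ℝ := fun i ω => φ (Xs i ω) with hZdef
    have hsv : MeasurableSet {x : X | x = v} := by
      simpa [Set.setOf_eq_eq_singleton] using measurableSet_singleton v
    have hφmeas : Measurable φ :=
      (Measurable.ite hsv measurable_const measurable_const).sub measurable_const
    have hφbdd : ∀ x, |φ x| ≤ 1 := by
      intro x
      rw [abs_le]
      dsimp [φ]
      split_ifs <;> constructor <;> linarith
    have hZmeas : ∀ i, Measurable (Z i) := fun i => hφmeas.comp (hmeas i)
    have hZindep : ProbabilityTheory.iIndepFun Z P :=
      hindep.comp (fun _ => φ) (fun _ => hφmeas)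
    have hZint : ∀ (t : ℝ) (i : Fin N), Integrable (fun ω => Real.exp (t * Z i ω)) P := by
      intro t i
      apply integrable_of_bdd P ((((hZmeas i)).const_mul t).exp) (Real.exp |t|)
      intro ω
      rw [abs_of_pos (Real.exp_pos _)]
      apply Real.exp_le_exp.mpr
      calc t * Z i ω ≤ |t * Z i ω| := le_abs_self _
      _ = |t| * |Z i ω| := abs_mul _ _
      _ ≤ |t| * 1 := by
          exact mul_le_mul_of_nonneg_left (hφbdd _) (abs_nonneg t)
      _ = |t| := mul_one _
    have hmgfZ : ∀ (t : ℝ), |t| ≤ 1 → ∀ i : Fin N,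
        ProbabilityTheory.mgf (Z i) P t ≤ Real.exp (3 / 16 * t ^ 2) := by
      intro t ht i
      have heq : ProbabilityTheory.mgf (Z i) P t = ∫ x, Real.exp (t * φ x) ∂μX := by
        rw [ProbabilityTheory.mgf, ← hlaw i,
          integral_map (hmeas i).aemeasurable
            ((hφmeas.const_mul t).exp.aestronglyMeasurable)]
      rw [heq]
      exact bern_exp_integral μX v t ht
    set S : Ω → ℝ := ∑ i : Fin N, Z i with hSdef
    have hSapp : ∀ ω, S ω = ∑ i : Fin N, Z i ω := by
      intro ω
      rw [hSdef]
      simp [Finset.sum_apply]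
    have hSint : ∀ t : ℝ, Integrable (fun ω => Real.exp (t * S ω)) P := fun t =>
      hZindep.integrable_exp_mul_sum hZmeas (fun i _ => hZint t i)
    have hmgfS : ∀ t : ℝ, |t| ≤ 1 →
        ProbabilityTheory.mgf S P t ≤ Real.exp (N * (3 / 16 * t ^ 2)) := by
      intro t ht
      rw [hSdef, hZindep.mgf_sum hZmeas]
      calc ∏ i : Fin N, ProbabilityTheory.mgf (Z i) P t
          ≤ ∏ _i : Fin N, Real.exp (3 / 16 * t ^ 2) :=
          Finset.prod_le_prod (fun i _ => ProbabilityTheory.mgf_nonneg)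
            (fun i _ => hmgfZ t ht i)
      _ = Real.exp (N * (3 / 16 * t ^ 2)) := by
          rw [Finset.prod_const, Finset.card_univ, Fintype.card_fin,
            ← Real.exp_nat_mul]
    have hNγsq : (N:ℝ) * γ ^ 2 = 4 * L := by
      rw [hγsq]
      field_simp
    have habsγ : |γ| ≤ 1 := by rw [abs_of_nonneg hγ0]; linarith
    -- upper tail
    have hup : P {ω | (N:ℝ) * γ ≤ S ω} ≤ ENNReal.ofReal (Real.exp (-(3 * L))) := by
      have h1 := ProbabilityTheory.measure_ge_le_exp_mul_mgf (μ := P) (X := S)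
        ((N:ℝ) * γ) hγ0 (hSint γ)
      have h2 : Real.exp (-γ * ((N:ℝ) * γ)) * ProbabilityTheory.mgf S P γ
          ≤ Real.exp (-(3 * L)) := by
        calc Real.exp (-γ * ((N:ℝ) * γ)) * ProbabilityTheory.mgf S P γ
            ≤ Real.exp (-γ * ((N:ℝ) * γ)) * Real.exp ((N:ℝ) * (3 / 16 * γ ^ 2)) :=
            mul_le_mul_of_nonneg_left (hmgfS γ habsγ) (Real.exp_pos _).le
        _ = Real.exp (-γ * ((N:ℝ) * γ) + (N:ℝ) * (3 / 16 * γ ^ 2)) :=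
            (Real.exp_add _ _).symm
        _ ≤ Real.exp (-(3 * L)) := by
            apply Real.exp_le_exp.mpr
            have he : -γ * ((N:ℝ) * γ) + (N:ℝ) * (3 / 16 * γ ^ 2)
                = -(13 / 16) * ((N:ℝ) * γ ^ 2) := by ring
            rw [he, hNγsq]
            linarith
      rw [← ENNReal.ofReal_toReal (measure_ne_top P _)]
      exact ENNReal.ofReal_le_ofReal (le_trans h1 h2)
    -- lower tail
    have hlo : P {ω | S ω ≤ -((N:ℝ) * γ)} ≤ ENNReal.ofReal (Real.exp (-(3 * L))) := by
      have h1 := ProbabilityTheory.measure_le_le_exp_mul_mgf (μ := P) (X := S)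
        (-((N:ℝ) * γ)) (neg_nonpos_of_nonneg hγ0) (hSint (-γ))
      have habsγ' : |(-γ)| ≤ 1 := by rwa [abs_neg]
      have h2 : Real.exp (-(-γ) * (-((N:ℝ) * γ))) * ProbabilityTheory.mgf S P (-γ)
          ≤ Real.exp (-(3 * L)) := by
        calc Real.exp (-(-γ) * (-((N:ℝ) * γ))) * ProbabilityTheory.mgf S P (-γ)
            ≤ Real.exp (-(-γ) * (-((N:ℝ) * γ))) * Real.exp ((N:ℝ) * (3 / 16 * (-γ) ^ 2)) :=
            mul_le_mul_of_nonneg_left (hmgfS (-γ) habsγ') (Real.exp_pos _).le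
        _ = Real.exp (-(-γ) * (-((N:ℝ) * γ)) + (N:ℝ) * (3 / 16 * (-γ) ^ 2)) :=
            (Real.exp_add _ _).symm
        _ ≤ Real.exp (-(3 * L)) := by
            apply Real.exp_le_exp.mpr
            have he : -(-γ) * (-((N:ℝ) * γ)) + (N:ℝ) * (3 / 16 * (-γ) ^ 2)
                = -(13 / 16) * ((N:ℝ) * γ ^ 2) := by ring
            rw [he, hNγsq]
            linarith
      rw [← ENNReal.ofReal_toReal (measure_ne_top P _)]
      exact ENNReal.ofReal_le_ofReal (le_trans h1 h2)
    -- inclusion into the two tails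
    have hsub : (A v)ᶜ ⊆ {ω | (N:ℝ) * γ ≤ S ω} ∪ {ω | S ω ≤ -((N:ℝ) * γ)} := by
      intro ω hω
      simp only [hA, Set.mem_compl_iff, Set.mem_setOf_eq, not_le] at hω
      have hSval : S ω
          = ((Finset.univ.filter (fun i : Fin N => Xs i ω = v)).card : ℝ)
            - N * (μX {v}).toReal := by
        rw [hSapp ω]
        simp only [hZdef, hφdef]
        rw [Finset.sum_sub_distrib, Finset.sum_const, Finset.card_univ, Fintype.card_fin]
        congr 1
        · rw [Finset.card_filter]
          push_cast
          rfl
        · simp [nsmul_eq_mul]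
      have hdiff : ((Finset.univ.filter (fun i : Fin N => Xs i ω = v)).card : ℝ) / N
          - (μX {v}).toReal = S ω / N := by
        rw [hSval]
        field_simp
      rw [hdiff, abs_div, abs_of_pos hNpos] at hω
      have hlt : (N:ℝ) * γ < |S ω| := by
        rw [lt_div_iff₀ hNpos] at hω
        linarith
      rcases lt_abs.mp hlt with h | h
      · left
        exact h.le
      · right
        simp only [Set.mem_setOf_eq]
        linarith
    calc P ((A v)ᶜ)
        ≤ P ({ω | (N:ℝ) * γ ≤ S ω} ∪ {ω | S ω ≤ -((N:ℝ) * γ)}) := measure_mono hsub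
    _ ≤ P {ω | (N:ℝ) * γ ≤ S ω} + P {ω | S ω ≤ -((N:ℝ) * γ)} := measure_union_le _ _
    _ ≤ ENNReal.ofReal (Real.exp (-(3 * L))) + ENNReal.ofReal (Real.exp (-(3 * L))) :=
        add_le_add hup hlo
    _ = ENNReal.ofReal (2 * Real.exp (-(3 * L))) := by
        rw [← ENNReal.ofReal_add (Real.exp_pos _).le (Real.exp_pos _).le]
        ring_nf
  -- union bound
  have hEc : P Eᶜ ≤ ENNReal.ofReal δ := by
    have hsub : Eᶜ ⊆ ⋃ v ∈ V, (A v)ᶜ := by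
      intro ω hω
      simp only [hE, Set.mem_compl_iff, Set.mem_iInter, not_forall] at hω
      obtain ⟨v, hv, hωv⟩ := hω
      exact Set.mem_biUnion hv hωv
    calc P Eᶜ ≤ P (⋃ v ∈ V, (A v)ᶜ) := measure_mono hsub
    _ ≤ ∑ v ∈ V, P ((A v)ᶜ) := measure_biUnion_finset_le V _
    _ ≤ ∑ _v ∈ V, ENNReal.ofReal (2 * Real.exp (-(3 * L))) := Finset.sum_le_sum hconc
    _ = V.card • ENNReal.ofReal (2 * Real.exp (-(3 * L))) := by
        rw [Finset.sum_const]
    _ = ENNReal.ofReal ((V.card : ℝ) * (2 * Real.exp (-(3 * L)))) := by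
        rw [nsmul_eq_mul, ← ENNReal.ofReal_natCast V.card,
          ← ENNReal.ofReal_mul (by positivity)]
    _ ≤ ENNReal.ofReal δ := by
        apply ENNReal.ofReal_le_ofReal
        have hexpL : Real.exp L = (V.card : ℝ) / δ := Real.exp_log (by linarith)
        have h3L : Real.exp (-(3 * L)) = (δ / (V.card : ℝ)) ^ 3 := by
          rw [Real.exp_neg]
          rw [show (3:ℝ) * L = ((3:ℕ) : ℝ) * L by norm_num, Real.exp_nat_mul, hexpL]
          rw [← inv_pow, inv_div]
        rw [h3L, div_pow]
        have hM0 : (0:ℝ) < (V.card : ℝ) := by linarith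
        rw [show ((V.card : ℝ)) * (2 * (δ ^ 3 / (V.card : ℝ) ^ 3))
          = 2 * δ ^ 3 / (V.card : ℝ) ^ 2 by field_simp]
        rw [div_le_iff₀ (by positivity)]
        have haux1 : δ ^ 3 ≤ δ := by
          calc δ ^ 3 ≤ δ ^ 1 := pow_le_pow_of_le_one hδ0.le hδ1 (by norm_num)
          _ = δ := pow_one δ
        have haux2 : (4:ℝ) ≤ (V.card : ℝ) ^ 2 := by nlinarith
        nlinarith
  -- the event implies the conclusion
  have hEsub : E ⊆ {ω : Ω | ∀ c : Fin k → X,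
      GreedySelection V
        (fun v => ((Finset.univ.filter (fun i : Fin N => Xs i ω = v)).card : ℝ) / N)
        (2 * ν) c →
      ∃ π : Equiv.Perm (Fin k), ∀ t : Fin k, dist (c t) (cs (π t)) ≤ ν} := by
    intro ω hω
    simp only [Set.mem_setOf_eq]
    intro c hc
    have hωA : ∀ v ∈ V,
        |((Finset.univ.filter (fun i : Fin N => Xs i ω = v)).card : ℝ) / N
          - (μX {v}).toReal| ≤ γ := by
      intro v hv
      have := Set.mem_iInter₂.mp hω v hv
      simpa [hA] using this
    exact greedy_det V cs hmem ν Γ hν hΓ hsep (α / k) (α * Real.exp (-ν ^ 2 / σ ^ 2)) γ hγ0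
      (fun x => (μX {x}).toReal)
      (fun v => ((Finset.univ.filter (fun i : Fin N => Xs i ω = v)).card : ℝ) / N)
      hp1 hp2 hgap hωA c hc
  -- conclude
  have h1 : P E + P Eᶜ = 1 := by
    rw [measure_add_measure_compl hEmeas, measure_univ]
  have h2 : ENNReal.ofReal (1 - δ) ≤ P E := by
    have hsum : ENNReal.ofReal (1 - δ) + ENNReal.ofReal δ = 1 := by
      rw [← ENNReal.ofReal_add (by linarith) hδ0.le]
      norm_num
    have hc : ENNReal.ofReal (1 - δ) + ENNReal.ofReal δ ≤ P E + ENNReal.ofReal δ := by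
      rw [hsum, ← h1]
      exact add_le_add le_rfl hEc
    exact (ENNReal.add_le_add_iff_right ENNReal.ofReal_ne_top).mp hc
  exact le_trans h2 (measure_mono hEsub)
end
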